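/- Let C be a multilinear code, i.e., an F_q-linear subspace of (F_q^r)^n such that dim_{F_q} C_X is divisible by r for all X ⊆ {1,...,n}. Viewing C as a linear code of length rn over F_q, its orthogonal complement C^⊥ in F_q^{rn} is also a multilinear code over F_q^r: for every X ⊆ {1,...,n}, dim_{F_q} (C^⊥)_{X_r} is divisible by r, where X_r = ⋃_{x ∈ X} {(x−1)r+1,...,(x−1)r+r}. -/

import Mathlib

/-- Projection of a subspace of `(F_q^r)^n = (Fin n → Fin r → K)` to the coordinates
in `X ⊆ {1,…,n}` (keeping all `r` subcoordinates of each selected block). -/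
noncomputable def projSub {K : Type*} [Field K] {r n : ℕ}
    (C : Submodule K (Fin n → Fin r → K)) (X : Finset (Fin n)) :
    Submodule K ({ i // i ∈ X } → Fin r → K) :=
  C.map (LinearMap.funLeft K (Fin r → K) (fun i : { i // i ∈ X } => (i : Fin n)))

/-- `C` is a multilinear code over `F_q^r`: an `F_q`-linear subspace of `(F_q^r)^n`
all of whose projections have `F_q`-dimension divisible by `r`. -/
def IsMultilinearCode {K : Type*} [Field K] (r n : ℕ)
    (C : Submodule K (Fin n → Fin r → K)) : Prop :=
  ∀ X : Finset (Fin n), r ∣ Module.finrank K (projSub C X)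

section Aux

open Module LinearMap

variable {K : Type*} [Field K] {r n : ℕ}

/-- The dot-product bilinear form on `ι → Fin r → K`. -/
noncomputable def dotBF (K : Type*) [Field K] (ι : Type*) [Fintype ι] (r : ℕ) :
    LinearMap.BilinForm K (ι → Fin r → K) :=
  LinearMap.mk₂ K (fun x y => ∑ i, ∑ j, x i j * y i j)
    (fun x x' y => by simp [add_mul, Finset.sum_add_distrib])
    (fun c x y => by simp [Finset.mul_sum, mul_assoc])
    (fun x y y' => by simp [mul_add, Finset.sum_add_distrib])
    (fun c x y => by simp [Finset.mul_sum, mul_left_comm])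

lemma dotBF_apply {ι : Type*} [Fintype ι] (x y : ι → Fin r → K) :
    dotBF K ι r x y = ∑ i, ∑ j, x i j * y i j := rfl

lemma dotBF_refl (ι : Type*) [Fintype ι] : (dotBF K ι r).IsRefl := by
  intro x y h
  rw [dotBF_apply] at h ⊢
  rw [← h]
  exact Finset.sum_congr rfl fun i _ => Finset.sum_congr rfl fun j _ => mul_comm _ _

lemma dotBF_nondeg (ι : Type*) [Fintype ι] [DecidableEq ι] : (dotBF K ι r).Nondegenerate := by
  constructor
  · intro x h
    funext i j
    have := h (Pi.single i (Pi.single j 1))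
    simpa [dotBF_apply, Pi.single_apply, ite_apply, mul_ite, Finset.sum_ite_eq'] using this
  · intro x h
    funext i j
    have := h (Pi.single i (Pi.single j 1))
    simpa [dotBF_apply, Pi.single_apply, ite_apply, ite_mul, Finset.sum_ite_eq,
      Finset.sum_ite_eq'] using this

/-- Restriction to the coordinates of `X`. -/
noncomputable def projL (X : Finset (Fin n)) :
    (Fin n → Fin r → K) →ₗ[K] ({ i // i ∈ X } → Fin r → K) :=
  LinearMap.funLeft K (Fin r → K) (fun i : { i // i ∈ X } => (i : Fin n))

lemma projSub_eq (C : Submodule K (Fin n → Fin r → K)) (X : Finset (Fin n)) :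
    projSub C X = C.map (projL X) := rfl

/-- Extension by zero. -/
noncomputable def extZero (X : Finset (Fin n)) :
    ({ i // i ∈ X } → Fin r → K) →ₗ[K] (Fin n → Fin r → K) where
  toFun u := fun i => if h : i ∈ X then u ⟨i, h⟩ else 0
  map_add' u v := by funext i; by_cases h : i ∈ X <;> simp [h]
  map_smul' c u := by funext i; by_cases h : i ∈ X <;> simp [h]

lemma proj_ext (X : Finset (Fin n)) (u : { i // i ∈ X } → Fin r → K) :
    projL X (extZero X u) = u := by
  funext i
  exact dif_pos i.2

lemma extZero_injective (X : Finset (Fin n)) :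
    Function.Injective (extZero (K := K) (r := r) X) :=
  Function.LeftInverse.injective (g := projL X) (fun u => proj_ext X u)

lemma ker_projL (X : Finset (Fin n)) :
    LinearMap.ker (projL (K := K) (r := r) X) = LinearMap.range (extZero Xᶜ) := by
  ext y
  constructor
  · intro hy
    have hy' : ∀ i : { i // i ∈ X }, y (i : Fin n) = 0 := fun i => congrFun hy i
    refine ⟨fun i => y (i : Fin n), ?_⟩
    funext i
    by_cases h : i ∈ Xᶜ
    · exact dif_pos h
    · rw [Finset.mem_compl, not_not] at h
      have := hy' ⟨i, h⟩
      simp only [extZero, LinearMap.coe_mk, AddHom.coe_mk]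
      rw [dif_neg (by simpa using h)]
      exact this.symm
  · rintro ⟨u, rfl⟩
    have : ∀ i : { i // i ∈ X }, (extZero Xᶜ u) (i : Fin n) = 0 := by
      intro i
      simp only [extZero, LinearMap.coe_mk, AddHom.coe_mk]
      rw [dif_neg (by simp [i.2])]
    funext i
    exact this i

lemma dot_ext (X : Finset (Fin n)) (x : Fin n → Fin r → K) (u : { i // i ∈ X } → Fin r → K) :
    dotBF K (Fin n) r x (extZero X u) = dotBF K { i // i ∈ X } r (projL X x) u := by
  rw [dotBF_apply, dotBF_apply]
  rw [Finset.univ_eq_attach]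
  rw [show (∑ i ∈ X.attach, ∑ j, (projL X x) i j * u i j)
      = ∑ i ∈ X.attach, ∑ j, x (i : Fin n) j * (extZero X u) (i : Fin n) j from
    Finset.sum_congr rfl fun i _ => Finset.sum_congr rfl fun j _ => by
      simp only [projL, LinearMap.funLeft_apply, extZero, LinearMap.coe_mk, AddHom.coe_mk]
      rw [dif_pos i.2]]
  rw [Finset.sum_attach X (fun i => ∑ j, x i j * (extZero X u) i j)]
  refine (Finset.sum_subset X.subset_univ ?_).symm
  intro i _ hi
  refine Finset.sum_eq_zero fun j _ => ?_
  simp only [extZero, LinearMap.coe_mk, AddHom.coe_mk]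
  rw [dif_neg hi, Pi.zero_apply, mul_zero]


lemma inf_ker_eq (C : Submodule K (Fin n → Fin r → K)) (X : Finset (Fin n)) :
    (dotBF K (Fin n) r).orthogonal C ⊓ LinearMap.ker (projL X)
      = Submodule.map (extZero Xᶜ)
          ((dotBF K { i // i ∈ Xᶜ } r).orthogonal (projSub C Xᶜ)) := by
  ext y
  simp only [Submodule.mem_inf, Submodule.mem_map,
    LinearMap.BilinForm.mem_orthogonal_iff, LinearMap.BilinForm.isOrtho_def,
    projSub_eq]
  constructor
  · rintro ⟨hy, hk⟩
    rw [ker_projL] at hk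
    obtain ⟨u, rfl⟩ := hk
    refine ⟨u, ?_, rfl⟩
    rintro v ⟨x, hx, rfl⟩
    rw [← dot_ext]
    exact hy x hx
  · rintro ⟨u, hu, rfl⟩
    constructor
    · intro x hx
      rw [dot_ext]
      exact hu _ ⟨x, hx, rfl⟩
    · rw [ker_projL]
      exact ⟨u, rfl⟩

lemma finrank_small (X : Finset (Fin n)) :
    Module.finrank K ({ i // i ∈ X } → Fin r → K) = X.card * r := by
  rw [Module.finrank_pi_fintype]
  simp [Module.finrank_fin_fun]

lemma finrank_big :
    Module.finrank K (Fin n → Fin r → K) = n * r := by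
  rw [Module.finrank_pi_fintype]
  simp [Module.finrank_fin_fun]

lemma finrank_projSub_univ (C : Submodule K (Fin n → Fin r → K)) :
    Module.finrank K (projSub C Finset.univ) = Module.finrank K C := by
  rw [projSub_eq]
  have hinj : Function.Injective (projL (K := K) (r := r) (Finset.univ : Finset (Fin n))) :=
    LinearMap.funLeft_injective_of_surjective K (Fin r → K) _
      (fun i => ⟨⟨i, Finset.mem_univ i⟩, rfl⟩)
  exact (Submodule.equivMapOfInjective _ hinj C).finrank_eq.symm

lemma finrank_proj_add (D : Submodule K (Fin n → Fin r → K)) (X : Finset (Fin n)) :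
    Module.finrank K (projSub D X)
      + Module.finrank K (D ⊓ LinearMap.ker (projL X) : Submodule K _)
      = Module.finrank K D := by
  have h := LinearMap.finrank_range_add_finrank_ker ((projL (K := K) (r := r) X).domRestrict D)
  rw [LinearMap.range_domRestrict, LinearMap.ker_domRestrict] at h
  rw [projSub_eq, ← Submodule.map_comap_subtype, Submodule.finrank_map_subtype_eq]
  exact h

end Aux

/-- the orthogonal complement (in `F_q^{rn}`, with the standard bilinear
form) of a multilinear code over `F_q^r` is again a multilinear code over `F_q^r`. -/
theorem dual_of_multilinear_is_multilinear
    {K : Type*} [Field K] [Fintype K] (r n : ℕ)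
    (C D : Submodule K (Fin n → Fin r → K))
    (hC : IsMultilinearCode r n C)
    (hD : ∀ y : Fin n → Fin r → K,
      y ∈ D ↔ ∀ x ∈ C, (∑ i : Fin n, ∑ j : Fin r, x i j * y i j) = 0) :
    IsMultilinearCode r n D := by
  intro X
  classical
  have hrefl := dotBF_refl (K := K) (r := r) (Fin n)
  have hnd := dotBF_nondeg (K := K) (r := r) (Fin n)
  have hDeq : D = (dotBF K (Fin n) r).orthogonal C := by
    ext y
    rw [hD y, LinearMap.BilinForm.mem_orthogonal_iff]
    rfl
  -- equation (3)
  have h3 : Module.finrank K C + Module.finrank K D = n * r := by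
    have h := LinearMap.BilinForm.finrank_add_finrank_orthogonal hrefl C
    rw [LinearMap.BilinForm.orthogonal_top_eq_bot hnd, inf_bot_eq, finrank_bot,
      add_zero, finrank_big] at h
    rw [hDeq]
    exact h
  -- equation (1)
  have h1 := finrank_proj_add D X
  -- equation (2)
  have h2 : Module.finrank K (D ⊓ LinearMap.ker (projL X) : Submodule K _)
      + Module.finrank K (projSub C Xᶜ) = Xᶜ.card * r := by
    have horth := LinearMap.BilinForm.finrank_add_finrank_orthogonal
      (B := dotBF K { i // i ∈ Xᶜ } r) (dotBF_refl _) (projSub C Xᶜ)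
    rw [LinearMap.BilinForm.orthogonal_top_eq_bot (dotBF_nondeg _), inf_bot_eq,
      finrank_bot, add_zero, finrank_small] at horth
    rw [hDeq, inf_ker_eq C X,
      (Submodule.equivMapOfInjective _ (extZero_injective Xᶜ) _).finrank_eq.symm, add_comm]
    exact horth
  -- conclusion
  have key : Module.finrank K (projSub D X)
      + (Module.finrank K C + Xᶜ.card * r)
      = n * r + Module.finrank K (projSub C Xᶜ) := by
    calc Module.finrank K (projSub D X) + (Module.finrank K C + Xᶜ.card * r)
        = Module.finrank K (projSub D X) + (Module.finrank K C
            + (Module.finrank K (D ⊓ LinearMap.ker (projL X) : Submodule K _)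
              + Module.finrank K (projSub C Xᶜ))) := by rw [h2]
      _ = (Module.finrank K C + (Module.finrank K (projSub D X)
            + Module.finrank K (D ⊓ LinearMap.ker (projL X) : Submodule K _)))
            + Module.finrank K (projSub C Xᶜ) := by ring
      _ = (Module.finrank K C + Module.finrank K D)
            + Module.finrank K (projSub C Xᶜ) := by rw [h1]
      _ = n * r + Module.finrank K (projSub C Xᶜ) := by rw [h3]
  have hCdvd : r ∣ Module.finrank K C := by
    rw [← finrank_projSub_univ C]
    exact hC Finset.univ
  have hdvd : r ∣ Module.finrank K (projSub D X) + (Module.finrank K C + Xᶜ.card * r) := by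
    rw [key]
    exact dvd_add (dvd_mul_left r n) (hC Xᶜ)
  rw [add_comm] at hdvd
  exact (Nat.dvd_add_right (dvd_add hCdvd (dvd_mul_left r Xᶜ.card))).mp hdvd
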